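/- Let T₁' : E₁' → E₂', T₂' : E₂' → E₃', T₁'' : E₁'' → E₂'', T₂'' : E₂'' → E₃'' be contractions between complex Hilbert spaces. Then the factorization (T₂' ⊕ T₂'')(T₁' ⊕ T₁'') of the direct sum operators (acting between the Hilbert space orthogonal direct sums E₁' ⊕ E₁'' → E₂' ⊕ E₂'' → E₃' ⊕ E₃'') is regular if and only if both factorizations T₂'T₁' and T₂''T₁'' are regular. -/

import Mathlib

open ContinuousLinearMap

set_option linter.unusedSectionVars false
set_option linter.unnecessarySeqFocus false

set_option maxHeartbeats 2000000
set_option synthInstance.maxHeartbeats 1000000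

open ContinuousLinearMap

noncomputable section StmtFiveAux

variable {F' F'' G' G'' : Type*}
  [NormedAddCommGroup F'] [InnerProductSpace ℂ F'] [CompleteSpace F']
  [NormedAddCommGroup F''] [InnerProductSpace ℂ F''] [CompleteSpace F'']
  [NormedAddCommGroup G'] [InnerProductSpace ℂ G'] [CompleteSpace G']
  [NormedAddCommGroup G''] [InnerProductSpace ℂ G''] [CompleteSpace G'']

/-- direct sum of two operators on the `L²` direct sum -/
def dsumCLM (A : F' →L[ℂ] G') (B : F'' →L[ℂ] G'') :
    WithLp 2 (F' × F'') →L[ℂ] WithLp 2 (G' × G'') :=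
  (((WithLp.prodContinuousLinearEquiv 2 ℂ G' G'').symm :
      (G' × G'') →L[ℂ] WithLp 2 (G' × G'')) ∘L (A.prodMap B)) ∘L
    ((WithLp.prodContinuousLinearEquiv 2 ℂ F' F'') :
      WithLp 2 (F' × F'') →L[ℂ] (F' × F''))

lemma dsumCLM_apply_fst (A : F' →L[ℂ] G') (B : F'' →L[ℂ] G'') (x : WithLp 2 (F' × F'')) :
    (dsumCLM A B x).fst = A x.fst := rfl

lemma dsumCLM_apply_snd (A : F' →L[ℂ] G') (B : F'' →L[ℂ] G'') (x : WithLp 2 (F' × F'')) :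
    (dsumCLM A B x).snd = B x.snd := rfl

lemma dsumCLM_comp {H' H'' : Type*}
    [NormedAddCommGroup H'] [InnerProductSpace ℂ H'] [CompleteSpace H']
    [NormedAddCommGroup H''] [InnerProductSpace ℂ H''] [CompleteSpace H'']
    (A : G' →L[ℂ] H') (B : G'' →L[ℂ] H'') (C : F' →L[ℂ] G') (D : F'' →L[ℂ] G'') :
    dsumCLM A B ∘L dsumCLM C D = dsumCLM (A ∘L C) (B ∘L D) := rfl

lemma dsumCLM_one : dsumCLM (1 : F' →L[ℂ] F') (1 : F'' →L[ℂ] F'') = 1 := rfl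

lemma dsumCLM_sub (A C : F' →L[ℂ] G') (B D : F'' →L[ℂ] G'') :
    dsumCLM (A - C) (B - D) = dsumCLM A B - dsumCLM C D := by
  ext x <;> rfl

lemma dsumCLM_adjoint (A : F' →L[ℂ] G') (B : F'' →L[ℂ] G'') :
    adjoint (dsumCLM A B) = dsumCLM (adjoint A) (adjoint B) := by
  symm
  rw [eq_adjoint_iff]
  intro x y
  have h1 : (inner ℂ ((dsumCLM (adjoint A) (adjoint B)) x) y : ℂ)
      = inner ℂ (adjoint A x.fst) y.fst + inner ℂ (adjoint B x.snd) y.snd := rfl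
  rw [h1, adjoint_inner_left, adjoint_inner_left]
  rfl

lemma dsumCLM_isPositive {A : F' →L[ℂ] F'} {B : F'' →L[ℂ] F''}
    (hA : A.IsPositive) (hB : B.IsPositive) : (dsumCLM A B).IsPositive := by
  rw [isPositive_def']
  constructor
  · rw [ContinuousLinearMap.isSelfAdjoint_iff', dsumCLM_adjoint,
      hA.isSelfAdjoint.adjoint_eq, hB.isSelfAdjoint.adjoint_eq]
  · intro x
    rw [reApplyInnerSelf_apply]
    have : (inner ℂ (dsumCLM A B x) x : ℂ) = inner ℂ (A x.fst) x.fst + inner ℂ (B x.snd) x.snd := rfl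
    rw [this, map_add]
    exact add_nonneg (hA.re_inner_nonneg_left x.fst) (hB.re_inner_nonneg_left x.snd)

lemma mem_range_dsumCLM {A : F' →L[ℂ] G'} {B : F'' →L[ℂ] G''} {x : WithLp 2 (G' × G'')} :
    x ∈ LinearMap.range (dsumCLM A B : WithLp 2 (F' × F'') →ₗ[ℂ] WithLp 2 (G' × G'')) ↔
      x.fst ∈ LinearMap.range (A : F' →ₗ[ℂ] G') ∧ x.snd ∈ LinearMap.range (B : F'' →ₗ[ℂ] G'') := by
  constructor
  · rintro ⟨y, rfl⟩
    exact ⟨⟨y.fst, rfl⟩, ⟨y.snd, rfl⟩⟩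
  · rintro ⟨⟨u, hu⟩, ⟨v, hv⟩⟩
    refine ⟨(WithLp.equiv 2 (F' × F'')).symm (u, v), ?_⟩
    exact (WithLp.equiv 2 (G' × G'')).injective (Prod.ext hu hv)

lemma pos_sq_inj {A B : F' →L[ℂ] F'} (hA : A.IsPositive) (hB : B.IsPositive)
    (h : A ∘L A = B ∘L B) : A = B := by
  have hA' : (0 : F' →L[ℂ] F') ≤ A := (nonneg_iff_isPositive A).2 hA
  have hB' : (0 : F' →L[ℂ] F') ≤ B := (nonneg_iff_isPositive B).2 hB
  have h' : A * A = B * B := h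
  rw [← CFC.sqrt_unique (a := A * A) rfl hA', h', CFC.sqrt_unique rfl hB']

end StmtFiveAux

/-- The factorization `(T₂' ⊕ T₂'')(T₁' ⊕ T₁'')` of direct sums of contractions is regular if
and only if both `T₂'T₁'` and `T₂''T₁''` are regular. A factorization `T₂T₁` is regular if the
images of the defect operators `D_{T₂}` and `D_{T₁*}` of the middle space intersect only
in `{0}`; the defect operator of a contraction `T` is the positive square root of `1 - T*T`.
The direct sum of Hilbert spaces is modeled by `WithLp 2 (E × F)` and `S₁ = T₁' ⊕ T₁''`,
`S₂ = T₂' ⊕ T₂''` act componentwise. -/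
theorem stmt_5
    {E₁' E₂' E₃' E₁'' E₂'' E₃'' : Type*}
    [NormedAddCommGroup E₁'] [InnerProductSpace ℂ E₁'] [CompleteSpace E₁']
    [NormedAddCommGroup E₂'] [InnerProductSpace ℂ E₂'] [CompleteSpace E₂']
    [NormedAddCommGroup E₃'] [InnerProductSpace ℂ E₃'] [CompleteSpace E₃']
    [NormedAddCommGroup E₁''] [InnerProductSpace ℂ E₁''] [CompleteSpace E₁'']
    [NormedAddCommGroup E₂''] [InnerProductSpace ℂ E₂''] [CompleteSpace E₂'']
    [NormedAddCommGroup E₃''] [InnerProductSpace ℂ E₃''] [CompleteSpace E₃'']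
    (T₁' : E₁' →L[ℂ] E₂') (T₂' : E₂' →L[ℂ] E₃')
    (T₁'' : E₁'' →L[ℂ] E₂'') (T₂'' : E₂'' →L[ℂ] E₃'')
    (hT₁' : ‖T₁'‖ ≤ 1) (hT₂' : ‖T₂'‖ ≤ 1) (hT₁'' : ‖T₁''‖ ≤ 1) (hT₂'' : ‖T₂''‖ ≤ 1)
    -- the direct sum operators `S₁ = T₁' ⊕ T₁''` and `S₂ = T₂' ⊕ T₂''`
    (S₁ : WithLp 2 (E₁' × E₁'') →L[ℂ] WithLp 2 (E₂' × E₂''))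
    (S₂ : WithLp 2 (E₂' × E₂'') →L[ℂ] WithLp 2 (E₃' × E₃''))
    (hS₁ : ∀ x, WithLp.equiv 2 (E₂' × E₂'') (S₁ x) =
      (T₁' (WithLp.equiv 2 (E₁' × E₁'') x).1, T₁'' (WithLp.equiv 2 (E₁' × E₁'') x).2))
    (hS₂ : ∀ x, WithLp.equiv 2 (E₃' × E₃'') (S₂ x) =
      (T₂' (WithLp.equiv 2 (E₂' × E₂'') x).1, T₂'' (WithLp.equiv 2 (E₂' × E₂'') x).2))
    -- defect operators of `T₂'`, `T₂''`, `S₂` on the respective middle spaces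
    (D₂' : E₂' →L[ℂ] E₂') (hD₂' : D₂'.IsPositive ∧ D₂' ∘L D₂' = 1 - adjoint T₂' ∘L T₂')
    (D₂'' : E₂'' →L[ℂ] E₂'') (hD₂'' : D₂''.IsPositive ∧ D₂'' ∘L D₂'' = 1 - adjoint T₂'' ∘L T₂'')
    (DS₂ : WithLp 2 (E₂' × E₂'') →L[ℂ] WithLp 2 (E₂' × E₂''))
    (hDS₂ : DS₂.IsPositive ∧ DS₂ ∘L DS₂ = 1 - adjoint S₂ ∘L S₂)
    -- defect operators of `T₁'*`, `T₁''*`, `S₁*`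
    (D₁s' : E₂' →L[ℂ] E₂') (hD₁s' : D₁s'.IsPositive ∧ D₁s' ∘L D₁s' = 1 - T₁' ∘L adjoint T₁')
    (D₁s'' : E₂'' →L[ℂ] E₂'') (hD₁s'' : D₁s''.IsPositive ∧ D₁s'' ∘L D₁s'' = 1 - T₁'' ∘L adjoint T₁'')
    (DS₁s : WithLp 2 (E₂' × E₂'') →L[ℂ] WithLp 2 (E₂' × E₂''))
    (hDS₁s : DS₁s.IsPositive ∧ DS₁s ∘L DS₁s = 1 - S₁ ∘L adjoint S₁) :
    (LinearMap.range (DS₂ : WithLp 2 (E₂' × E₂'') →ₗ[ℂ] WithLp 2 (E₂' × E₂'')) ⊓ LinearMap.range (DS₁s : WithLp 2 (E₂' × E₂'') →ₗ[ℂ] WithLp 2 (E₂' × E₂'')) = ⊥) ↔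
      ((LinearMap.range (D₂' : E₂' →ₗ[ℂ] E₂') ⊓ LinearMap.range (D₁s' : E₂' →ₗ[ℂ] E₂') = ⊥) ∧
       (LinearMap.range (D₂'' : E₂'' →ₗ[ℂ] E₂'') ⊓ LinearMap.range (D₁s'' : E₂'' →ₗ[ℂ] E₂'') = ⊥)) := by
  have hS1 : S₁ = dsumCLM T₁' T₁'' := by
    ext x
    exact (WithLp.equiv 2 (E₂' × E₂'')).injective (hS₁ x)
  have hS2 : S₂ = dsumCLM T₂' T₂'' := by
    ext x
    exact (WithLp.equiv 2 (E₃' × E₃'')).injective (hS₂ x)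
  have hD2 : DS₂ = dsumCLM D₂' D₂'' := by
    refine pos_sq_inj hDS₂.1 (dsumCLM_isPositive hD₂'.1 hD₂''.1) ?_
    calc DS₂ ∘L DS₂ = 1 - adjoint S₂ ∘L S₂ := hDS₂.2
      _ = dsumCLM (1 - adjoint T₂' ∘L T₂') (1 - adjoint T₂'' ∘L T₂'') := by
          rw [hS2, dsumCLM_adjoint, dsumCLM_comp, dsumCLM_sub, dsumCLM_one]
      _ = dsumCLM (D₂' ∘L D₂') (D₂'' ∘L D₂'') := by rw [hD₂'.2, hD₂''.2]
      _ = dsumCLM D₂' D₂'' ∘L dsumCLM D₂' D₂'' := (dsumCLM_comp _ _ _ _).symm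
  have hD1 : DS₁s = dsumCLM D₁s' D₁s'' := by
    refine pos_sq_inj hDS₁s.1 (dsumCLM_isPositive hD₁s'.1 hD₁s''.1) ?_
    calc DS₁s ∘L DS₁s = 1 - S₁ ∘L adjoint S₁ := hDS₁s.2
      _ = dsumCLM (1 - T₁' ∘L adjoint T₁') (1 - T₁'' ∘L adjoint T₁'') := by
          rw [hS1, dsumCLM_adjoint, dsumCLM_comp, dsumCLM_sub, dsumCLM_one]
      _ = dsumCLM (D₁s' ∘L D₁s') (D₁s'' ∘L D₁s'') := by rw [hD₁s'.2, hD₁s''.2]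
      _ = dsumCLM D₁s' D₁s'' ∘L dsumCLM D₁s' D₁s'' := (dsumCLM_comp _ _ _ _).symm
  rw [hD2, hD1]
  constructor
  · intro h
    constructor
    · rw [Submodule.eq_bot_iff]
      intro u hu
      rw [Submodule.mem_inf] at hu
      have hv : ((WithLp.equiv 2 (E₂' × E₂'')).symm (u, 0)) ∈
          LinearMap.range (dsumCLM D₂' D₂'' : WithLp 2 (E₂' × E₂'') →ₗ[ℂ] WithLp 2 (E₂' × E₂'')) ⊓ LinearMap.range (dsumCLM D₁s' D₁s'' : WithLp 2 (E₂' × E₂'') →ₗ[ℂ] WithLp 2 (E₂' × E₂'')) := by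
        rw [Submodule.mem_inf, mem_range_dsumCLM, mem_range_dsumCLM]
        exact ⟨⟨hu.1, ⟨0, map_zero _⟩⟩, ⟨hu.2, ⟨0, map_zero _⟩⟩⟩
      have h0 := (Submodule.eq_bot_iff _).1 h _ hv
      calc u = ((WithLp.equiv 2 (E₂' × E₂'')).symm (u, 0)).fst := rfl
        _ = (0 : WithLp 2 (E₂' × E₂'')).fst := by rw [h0]
        _ = 0 := rfl
    · rw [Submodule.eq_bot_iff]
      intro u hu
      rw [Submodule.mem_inf] at hu
      have hv : ((WithLp.equiv 2 (E₂' × E₂'')).symm (0, u)) ∈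
          LinearMap.range (dsumCLM D₂' D₂'' : WithLp 2 (E₂' × E₂'') →ₗ[ℂ] WithLp 2 (E₂' × E₂'')) ⊓ LinearMap.range (dsumCLM D₁s' D₁s'' : WithLp 2 (E₂' × E₂'') →ₗ[ℂ] WithLp 2 (E₂' × E₂'')) := by
        rw [Submodule.mem_inf, mem_range_dsumCLM, mem_range_dsumCLM]
        exact ⟨⟨⟨0, map_zero _⟩, hu.1⟩, ⟨⟨0, map_zero _⟩, hu.2⟩⟩
      have h0 := (Submodule.eq_bot_iff _).1 h _ hv
      calc u = ((WithLp.equiv 2 (E₂' × E₂'')).symm (0, u)).snd := rfl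
        _ = (0 : WithLp 2 (E₂' × E₂'')).snd := by rw [h0]
        _ = 0 := rfl
  · rintro ⟨h1, h2⟩
    rw [Submodule.eq_bot_iff]
    intro x hx
    rw [Submodule.mem_inf, mem_range_dsumCLM, mem_range_dsumCLM] at hx
    have hx1 : x.fst = 0 :=
      (Submodule.eq_bot_iff _).1 h1 _ (Submodule.mem_inf.2 ⟨hx.1.1, hx.2.1⟩)
    have hx2 : x.snd = 0 :=
      (Submodule.eq_bot_iff _).1 h2 _ (Submodule.mem_inf.2 ⟨hx.1.2, hx.2.2⟩)
    exact (WithLp.equiv 2 (E₂' × E₂'')).injective (Prod.ext hx1 hx2)
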